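/- arXiv:1301.4629 — 2 statements merged into one kernel-verified Lean document; each statement's English description precedes it below -/
import Mathlib

section
/- Let G be a group with a normal subgroup H such that H is residually torsion-free nilpotent, G/H is torsion-free nilpotent, and G/[H,H] is nilpotent. Then G is residually torsion-free nilpotent. -/
open Subgroup

namespace RTFNAux

variable {G : Type*} [Group G]

/-- Iterated commutator with `⊤`. -/
def gser (X : Subgroup G) : ℕ → Subgroup G
  | 0 => X
  | s + 1 => ⁅gser X s, (⊤ : Subgroup G)⁆

@[simp] theorem gser_zero (X : Subgroup G) : gser X 0 = X := rfl

@[simp] theorem gser_succ (X : Subgroup G) (s : ℕ) :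
    gser X (s + 1) = ⁅gser X s, (⊤ : Subgroup G)⁆ := rfl

/-- The series `N, ⁅N,N⁆, ⁅⁅N,N⁆,N⁆, …`. -/
def nser (N : Subgroup G) : ℕ → Subgroup G
  | 0 => N
  | i + 1 => ⁅nser N i, N⁆

@[simp] theorem nser_zero (N : Subgroup G) : nser N 0 = N := rfl

@[simp] theorem nser_succ (N : Subgroup G) (i : ℕ) : nser N (i + 1) = ⁅nser N i, N⁆ := rfl

instance gser_normal (X : Subgroup G) [hX : X.Normal] (s : ℕ) : (gser X s).Normal := by
  induction s with
  | zero => exact hX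
  | succ s ih => exact @Subgroup.commutator_normal _ _ (gser X s) ⊤ ih _

instance nser_normal (N : Subgroup G) [hN : N.Normal] (i : ℕ) : (nser N i).Normal := by
  induction i with
  | zero => exact hN
  | succ i ih => exact @Subgroup.commutator_normal _ _ (nser N i) N ih hN

theorem gser_mono {X Y : Subgroup G} (h : X ≤ Y) (s : ℕ) : gser X s ≤ gser Y s := by
  induction s with
  | zero => exact h
  | succ s ih => exact commutator_mono ih le_rfl

theorem gser_le_self (X : Subgroup G) [X.Normal] (s : ℕ) : gser X s ≤ X := by
  induction s with
  | zero => exact le_rfl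
  | succ s ih => exact (commutator_le_left _ _).trans ih

theorem gser_top (s : ℕ) : gser (⊤ : Subgroup G) s = _root_.lowerCentralSeries (⊤ : Subgroup G) s := by
  induction s with
  | zero => rfl
  | succ s ih => rw [gser_succ, ih]; rfl

theorem gser_le_lcs (X : Subgroup G) (s : ℕ) : gser X s ≤ _root_.lowerCentralSeries (⊤ : Subgroup G) s := by
  rw [← gser_top]; exact gser_mono le_top s

theorem gser_add (X : Subgroup G) (m n : ℕ) : gser X (m + n) = gser (gser X m) n := by
  induction n with
  | zero => rfl
  | succ n ih => rw [← Nat.add_assoc, gser_succ, ih, gser_succ]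

theorem le_of_map_mk'_eq_bot {R S : Subgroup G} [R.Normal]
    (h : S.map (QuotientGroup.mk' R) = ⊥) : S ≤ R := by
  rwa [Subgroup.map_eq_bot_iff, QuotientGroup.ker_mk'] at h

theorem map_mk'_eq_bot_of_le {R S : Subgroup G} [R.Normal] (h : S ≤ R) :
    S.map (QuotientGroup.mk' R) = ⊥ := by
  rwa [Subgroup.map_eq_bot_iff, QuotientGroup.ker_mk']

/-- Three subgroups lemma for normal subgroups. -/
theorem three_subgroups (X Y Z : Subgroup G) [X.Normal] [Y.Normal] [Z.Normal] :
    ⁅⁅X, Y⁆, Z⁆ ≤ ⁅⁅Y, Z⁆, X⁆ ⊔ ⁅⁅Z, X⁆, Y⁆ := by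
  set R : Subgroup G := ⁅⁅Y, Z⁆, X⁆ ⊔ ⁅⁅Z, X⁆, Y⁆ with hR
  haveI : R.Normal := Subgroup.sup_normal _ _
  set π := QuotientGroup.mk' R
  apply le_of_map_mk'_eq_bot
  rw [Subgroup.map_commutator, Subgroup.map_commutator]
  apply Subgroup.commutator_commutator_eq_bot_of_rotate
  · rw [← Subgroup.map_commutator, ← Subgroup.map_commutator]
    exact map_mk'_eq_bot_of_le le_sup_left
  · rw [← Subgroup.map_commutator, ← Subgroup.map_commutator]
    exact map_mk'_eq_bot_of_le le_sup_right

theorem commutator_sup_le (A B C : Subgroup G) [A.Normal] [B.Normal] [C.Normal] :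
    ⁅A ⊔ B, C⁆ ≤ ⁅A, C⁆ ⊔ ⁅B, C⁆ := by
  set R : Subgroup G := ⁅A, C⁆ ⊔ ⁅B, C⁆ with hR
  haveI : R.Normal := Subgroup.sup_normal _ _
  set π := QuotientGroup.mk' R
  apply le_of_map_mk'_eq_bot
  rw [Subgroup.map_commutator, Subgroup.map_sup]
  rw [Subgroup.commutator_eq_bot_iff_le_centralizer]
  apply sup_le
  · rw [← Subgroup.commutator_eq_bot_iff_le_centralizer, ← Subgroup.map_commutator]
    exact map_mk'_eq_bot_of_le le_sup_left
  · rw [← Subgroup.commutator_eq_bot_iff_le_centralizer, ← Subgroup.map_commutator]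
    exact map_mk'_eq_bot_of_le le_sup_right

theorem nser_comm_le (N : Subgroup G) [N.Normal] :
    ∀ b a, ⁅nser N a, nser N b⁆ ≤ nser N (a + b + 1) := by
  intro b
  induction b with
  | zero => intro a; simp only [nser_zero, Nat.add_zero]; exact le_rfl
  | succ b ih =>
    intro a
    rw [nser_succ, Subgroup.commutator_comm]
    calc ⁅⁅nser N b, N⁆, nser N a⁆
        ≤ ⁅⁅N, nser N a⁆, nser N b⁆ ⊔ ⁅⁅nser N a, nser N b⁆, N⁆ :=
          three_subgroups _ _ _
      _ ≤ nser N (a + (b + 1) + 1) := by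
          apply sup_le
          · rw [Subgroup.commutator_comm N (nser N a)]
            have h1 : ⁅nser N a, N⁆ = nser N (a + 1) := rfl
            rw [h1]
            have := ih (a + 1)
            calc ⁅nser N (a+1), nser N b⁆ ≤ nser N (a + 1 + b + 1) := this
              _ ≤ nser N (a + (b+1) + 1) := by
                  have : a + 1 + b + 1 = a + (b + 1) + 1 := by omega
                  rw [this]
          · calc ⁅⁅nser N a, nser N b⁆, N⁆ ≤ ⁅nser N (a + b + 1), N⁆ :=
                  commutator_mono (ih a) le_rfl
              _ = nser N (a + b + 2) := rfl
              _ ≤ nser N (a + (b+1) + 1) := by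
                  have : a + b + 2 = a + (b + 1) + 1 := by omega
                  rw [this]

theorem gser_sup_le (A B : Subgroup G) [A.Normal] [B.Normal] (s : ℕ) :
    gser (A ⊔ B) s ≤ gser A s ⊔ gser B s := by
  induction s with
  | zero => exact le_rfl
  | succ s ih =>
    calc gser (A ⊔ B) (s+1) = ⁅gser (A ⊔ B) s, (⊤ : Subgroup G)⁆ := rfl
      _ ≤ ⁅gser A s ⊔ gser B s, (⊤ : Subgroup G)⁆ := commutator_mono ih le_rfl
      _ ≤ ⁅gser A s, (⊤ : Subgroup G)⁆ ⊔ ⁅gser B s, (⊤ : Subgroup G)⁆ :=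
          commutator_sup_le _ _ _
      _ = gser A (s+1) ⊔ gser B (s+1) := rfl

/-- Leibniz-type bound for the iterated commutator series of a commutator. -/
theorem leib (R : Subgroup G) [R.Normal] :
    ∀ (s : ℕ) (X Y : Subgroup G), X.Normal → Y.Normal →
      (∀ p q, p + q = s → ⁅gser X p, gser Y q⁆ ≤ R) → gser ⁅X, Y⁆ s ≤ R := by
  intro s
  induction s with
  | zero =>
    intro X Y _ _ h
    exact h 0 0 rfl
  | succ s ih =>
    intro X Y hX hY h
    haveI := hX; haveI := hY
    have e1 : gser ⁅X, Y⁆ (s + 1) = gser (gser ⁅X, Y⁆ 1) s := by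
      rw [show s + 1 = 1 + s from Nat.add_comm s 1, gser_add]
    rw [e1]
    have e2 : gser ⁅X, Y⁆ 1 = ⁅⁅X, Y⁆, (⊤ : Subgroup G)⁆ := rfl
    have h3 : ⁅⁅X, Y⁆, (⊤ : Subgroup G)⁆ ≤ ⁅⁅Y, ⊤⁆, X⁆ ⊔ ⁅⁅(⊤ : Subgroup G), X⁆, Y⁆ :=
      three_subgroups _ _ _
    have h4 : ⁅⁅Y, (⊤ : Subgroup G)⁆, X⁆ ⊔ ⁅⁅(⊤ : Subgroup G), X⁆, Y⁆
        = ⁅X, ⁅Y, (⊤ : Subgroup G)⁆⁆ ⊔ ⁅⁅X, (⊤ : Subgroup G)⁆, Y⁆ := by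
      rw [Subgroup.commutator_comm ⁅Y, (⊤ : Subgroup G)⁆ X,
        Subgroup.commutator_comm (⊤ : Subgroup G) X]
    haveI : Subgroup.Normal ⁅X, ⁅Y, (⊤ : Subgroup G)⁆⁆ := Subgroup.commutator_normal _ _
    haveI : Subgroup.Normal ⁅⁅X, (⊤ : Subgroup G)⁆, Y⁆ := Subgroup.commutator_normal _ _
    calc gser (gser ⁅X, Y⁆ 1) s
        ≤ gser (⁅X, ⁅Y, (⊤ : Subgroup G)⁆⁆ ⊔ ⁅⁅X, (⊤ : Subgroup G)⁆, Y⁆) s := by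
          apply gser_mono
          rw [e2]; exact h3.trans (le_of_eq h4)
      _ ≤ gser ⁅X, ⁅Y, (⊤ : Subgroup G)⁆⁆ s ⊔ gser ⁅⁅X, (⊤ : Subgroup G)⁆, Y⁆ s :=
          gser_sup_le _ _ s
      _ ≤ R := by
          apply sup_le
          · apply ih X ⁅Y, (⊤ : Subgroup G)⁆ hX (Subgroup.commutator_normal _ _)
            intro p q hpq
            have : gser ⁅Y, (⊤ : Subgroup G)⁆ q = gser Y (q + 1) := by
              rw [Nat.add_comm q 1, gser_add]; rfl
            rw [this]
            exact h p (q + 1) (by omega)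
          · apply ih ⁅X, (⊤ : Subgroup G)⁆ Y (Subgroup.commutator_normal _ _) hY
            intro p q hpq
            have : gser ⁅X, (⊤ : Subgroup G)⁆ p = gser X (p + 1) := by
              rw [Nat.add_comm p 1, gser_add]; rfl
            rw [this]
            exact h (p + 1) q (by omega)

theorem main_bound (N : Subgroup G) [N.Normal] (d : ℕ)
    (hd : _root_.lowerCentralSeries (⊤ : Subgroup G) d ≤ nser N 1) :
    ∀ a p, d * (a + 1) ≤ p → gser (nser N a) p ≤ nser N (a + 1) := by
  intro a
  induction a with
  | zero =>
    intro p hp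
    calc gser (nser N 0) p ≤ _root_.lowerCentralSeries (⊤ : Subgroup G) p := gser_le_lcs _ p
      _ ≤ _root_.lowerCentralSeries (⊤ : Subgroup G) d := _root_.lowerCentralSeries_antitone _ (by omega)
      _ ≤ nser N 1 := hd
  | succ a ih =>
    intro p hp
    have : gser (nser N (a + 1)) p = gser ⁅nser N a, N⁆ p := rfl
    rw [this]
    apply leib (nser N (a + 2)) p (nser N a) N inferInstance inferInstance
    intro p' q' hpq
    by_cases hp' : d * (a + 1) ≤ p'
    · calc ⁅gser (nser N a) p', gser N q'⁆ ≤ ⁅nser N (a + 1), N⁆ :=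
            commutator_mono (ih p' hp') (gser_le_self N q')
        _ = nser N (a + 2) := rfl
    · have hmul : d * (a + 1 + 1) = d * (a + 1) + d := by ring
      have hq' : d ≤ q' := by omega
      calc ⁅gser (nser N a) p', gser N q'⁆ ≤ ⁅nser N a, nser N 1⁆ := by
            apply commutator_mono (gser_le_self _ p')
            calc gser N q' ≤ _root_.lowerCentralSeries (⊤ : Subgroup G) q' := gser_le_lcs _ _
              _ ≤ _root_.lowerCentralSeries (⊤ : Subgroup G) d := _root_.lowerCentralSeries_antitone _ hq'
              _ ≤ nser N 1 := hd
        _ ≤ nser N (a + 1 + 1) := nser_comm_le N 1 a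
        _ = nser N (a + 2) := rfl

/-- P. Hall's nilpotency criterion, in the form we need. -/
theorem hall (N : Subgroup G) [N.Normal] (c d : ℕ) (hc : nser N c = ⊥)
    (hd : _root_.lowerCentralSeries (⊤ : Subgroup G) d ≤ nser N 1) : Group.IsNilpotent G := by
  have key : ∀ i, ∃ m, _root_.lowerCentralSeries (⊤ : Subgroup G) m ≤ nser N (i + 1) := by
    intro i
    induction i with
    | zero => exact ⟨d, hd⟩
    | succ i ih =>
      obtain ⟨m, hm⟩ := ih
      refine ⟨m + d * (i + 2), ?_⟩
      calc _root_.lowerCentralSeries (⊤ : Subgroup G) (m + d * (i + 2))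
          = gser (⊤ : Subgroup G) (m + d * (i + 2)) := (gser_top _).symm
        _ = gser (gser ⊤ m) (d * (i + 2)) := gser_add _ _ _
        _ = gser (_root_.lowerCentralSeries (⊤ : Subgroup G) m) (d * (i + 2)) := by rw [gser_top]
        _ ≤ gser (nser N (i + 1)) (d * (i + 2)) := gser_mono hm _
        _ ≤ nser N (i + 2) := main_bound N d hd (i + 1) _ le_rfl
  obtain ⟨m, hm⟩ := key c
  rw [_root_.nilpotent_iff_lowerCentralSeries]
  refine ⟨m, le_bot_iff.mp ?_⟩
  calc _root_.lowerCentralSeries (⊤ : Subgroup G) m ≤ nser N (c + 1) := hm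
    _ = ⁅nser N c, N⁆ := rfl
    _ = ⁅(⊥ : Subgroup G), N⁆ := by rw [hc]
    _ = ⊥ := Subgroup.commutator_bot_left N

theorem map_nser {G' : Type*} [Group G'] (f : G →* G') (N : Subgroup G) (i : ℕ) :
    (nser N i).map f = nser (N.map f) i := by
  induction i with
  | zero => rfl
  | succ i ih => rw [nser_succ, Subgroup.map_commutator, ih, nser_succ]

theorem map_lcs_of_surjective {G' : Type*} [Group G'] (f : G →* G')
    (hf : Function.Surjective f) (n : ℕ) :
    (_root_.lowerCentralSeries (⊤ : Subgroup G) n).map f = _root_.lowerCentralSeries (⊤ : Subgroup G') n := by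
  induction n with
  | zero => exact Subgroup.map_top_of_surjective f hf
  | succ n ih =>
    have e : _root_.lowerCentralSeries (⊤ : Subgroup G) (n + 1) = ⁅_root_.lowerCentralSeries (⊤ : Subgroup G) n, (⊤ : Subgroup G)⁆ := rfl
    have e' : _root_.lowerCentralSeries (⊤ : Subgroup G') (n + 1) = ⁅_root_.lowerCentralSeries (⊤ : Subgroup G') n, (⊤ : Subgroup G')⁆ := rfl
    rw [e, e', Subgroup.map_commutator, ih, Subgroup.map_top_of_surjective f hf]

theorem map_subtype_lcs (H : Subgroup G) (i : ℕ) :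
    (_root_.lowerCentralSeries (⊤ : Subgroup ↥H) i).map H.subtype = nser H i := by
  induction i with
  | zero =>
    simp only [_root_.lowerCentralSeries_zero, nser_zero]
    change Subgroup.map H.subtype ⊤ = H
    rw [← MonoidHom.range_eq_map, Subgroup.subtype_range]
  | succ i ih =>
    have e : _root_.lowerCentralSeries (⊤ : Subgroup ↥H) (i + 1) = ⁅_root_.lowerCentralSeries (⊤ : Subgroup ↥H) i, (⊤ : Subgroup ↥H)⁆ := rfl
    rw [e, Subgroup.map_commutator, ih, ← MonoidHom.range_eq_map, Subgroup.subtype_range, nser_succ]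

end RTFNAux

/-- The old Mathlib `Monoid.IsTorsionFree` (removed upstream), with its original meaning. -/
def Monoid.IsTorsionFree (G : Type*) [Monoid G] : Prop :=
  ∀ g : G, g ≠ 1 → ¬IsOfFinOrder g

/-- A group `G` is residually torsion-free nilpotent if every `g ≠ 1` avoids a normal
subgroup with torsion-free nilpotent quotient. -/
def IsResiduallyTorsionFreeNilpotent (G : Type*) [Group G] : Prop :=
  ∀ g : G, g ≠ 1 → ∃ (N : Subgroup G) (_ : N.Normal),
    g ∉ N ∧ Monoid.IsTorsionFree (G ⧸ N) ∧ Group.IsNilpotent (G ⧸ N)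

/-- Proposition 1: if `G` has a normal subgroup `H` which is residually torsion-free
nilpotent, such that `G/H` is torsion-free nilpotent and `G/[H,H]` is nilpotent, then `G`
is residually torsion-free nilpotent. -/
theorem residuallyTorsionFreeNilpotent_of_normal (G : Type*) [Group G]
    (H : Subgroup G) [H.Normal]
    (hH : IsResiduallyTorsionFreeNilpotent H)
    (hq_tf : Monoid.IsTorsionFree (G ⧸ H)) (hq_nilp : Group.IsNilpotent (G ⧸ H))
    (hcomm : Group.IsNilpotent (G ⧸ (⁅H, H⁆ : Subgroup G))) :
    IsResiduallyTorsionFreeNilpotent G := by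
  classical
  intro g hg
  by_cases hgH : g ∈ H
  case neg => exact ⟨H, inferInstance, hgH, hq_tf, hq_nilp⟩
  -- now g ∈ H
  obtain ⟨M, hMnormal, hgM, hMtf, hMnilp⟩ :=
    hH ⟨g, hgH⟩ (fun h => hg (by simpa [Subtype.ext_iff] using h))
  haveI := hMnormal
  obtain ⟨c, hc⟩ := _root_.nilpotent_iff_lowerCentralSeries.mp hMnilp
  -- the lower central series of H eventually lands in M
  have hHc : _root_.lowerCentralSeries (⊤ : Subgroup ↥H) c ≤ M := by
    have h1 := _root_.lowerCentralSeries.map (QuotientGroup.mk' M) c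
    rw [hc, le_bot_iff] at h1
    exact RTFNAux.le_of_map_mk'_eq_bot h1
  set K : Subgroup G := M.map H.subtype with hK
  have hKH : K ≤ H := Subgroup.map_subtype_le M
  have hnserHc : RTFNAux.nser H c ≤ K := by
    rw [← RTFNAux.map_subtype_lcs]
    exact Subgroup.map_mono hHc
  set T : Subgroup G := K.normalCore with hT
  haveI hTnormal : T.Normal := Subgroup.normalCore_normal K
  have hTK : T ≤ K := Subgroup.normalCore_le K
  have hTH : T ≤ H := hTK.trans hKH
  have hgK : g ∉ K := by
    rintro ⟨m, hm, hmg⟩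
    exact hgM (by rwa [show m = (⟨g, hgH⟩ : ↥H) from Subtype.ext hmg] at hm)
  have hgT : g ∉ T := fun h => hgK (hTK h)
  have hnserT : RTFNAux.nser H c ≤ T := Subgroup.normal_le_normalCore.mpr hnserHc
  -- membership in K for subtype elements
  have memK : ∀ (z : ↥H), (z : G) ∈ K ↔ z ∈ M := by
    intro z
    constructor
    · rintro ⟨m, hm, hme⟩; rwa [show m = z from Subtype.ext hme] at hm
    · intro hz; exact ⟨z, hz, rfl⟩
  -- torsion-step: if a power of an element of H lies in T, so does the element
  have hTFstep : ∀ x ∈ H, ∀ n : ℕ, 0 < n → x ^ n ∈ T → x ∈ T := by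
    intro x hx n hn hxn
    show ∀ b : G, b * x * b⁻¹ ∈ K
    intro b
    have hconj : b * x * b⁻¹ ∈ H := ‹H.Normal›.conj_mem x hx b
    set z : ↥H := ⟨b * x * b⁻¹, hconj⟩ with hz
    have hzn : z ^ n ∈ M := by
      rw [← memK, Subgroup.coe_pow]
      have : ((b * x * b⁻¹) : G) ^ n = b * x ^ n * b⁻¹ := by
        rw [conj_pow]
      rw [hz]
      simp only
      rw [this]
      exact hTK (hTnormal.conj_mem _ hxn b)
    have hmk : (z : ↥H ⧸ M) = 1 := by
      by_contra hne
      exact hMtf _ hne (isOfFinOrder_iff_pow_eq_one.mpr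
        ⟨n, hn, by rw [← QuotientGroup.mk_pow, QuotientGroup.eq_one_iff]; exact hzn⟩)
    rw [QuotientGroup.eq_one_iff] at hmk
    exact (memK z).mpr hmk
  -- pass to the quotient G/T
  set π : G →* G ⧸ T := QuotientGroup.mk' T with hπ
  have hπsurj : Function.Surjective π := QuotientGroup.mk'_surjective T
  set Hbar : Subgroup (G ⧸ T) := H.map π with hHbar
  haveI : Hbar.Normal := Subgroup.Normal.map ‹H.Normal› π hπsurj
  -- Hall hypothesis 1 : nser Hbar c = ⊥
  have hc' : RTFNAux.nser Hbar c = ⊥ := by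
    rw [hHbar, ← RTFNAux.map_nser]
    exact RTFNAux.map_mk'_eq_bot_of_le hnserT
  -- Hall hypothesis 2 : lcs (G/T) d ≤ ⁅Hbar, Hbar⁆
  obtain ⟨d, hd⟩ := _root_.nilpotent_iff_lowerCentralSeries.mp hcomm
  have hGd : _root_.lowerCentralSeries (⊤ : Subgroup G) d ≤ ⁅H, H⁆ := by
    have h1 := _root_.lowerCentralSeries.map (QuotientGroup.mk' (⁅H, H⁆ : Subgroup G)) d
    rw [hd, le_bot_iff] at h1
    exact RTFNAux.le_of_map_mk'_eq_bot h1
  have hd' : _root_.lowerCentralSeries (⊤ : Subgroup (G ⧸ T)) d ≤ RTFNAux.nser Hbar 1 := by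
    have e1 : RTFNAux.nser Hbar 1 = ⁅Hbar, Hbar⁆ := rfl
    rw [e1, ← RTFNAux.map_lcs_of_surjective π hπsurj d, hHbar, ← Subgroup.map_commutator]
    exact Subgroup.map_mono hGd
  have hnilpQ : Group.IsNilpotent (G ⧸ T) := RTFNAux.hall Hbar c d hc' hd'
  -- torsion-freeness of G/T
  have hTFQ : Monoid.IsTorsionFree (G ⧸ T) := by
    intro z hz hfin
    obtain ⟨n, hn, hzn⟩ := isOfFinOrder_iff_pow_eq_one.mp hfin
    obtain ⟨x, rfl⟩ := hπsurj z
    have hxn : x ^ n ∈ T := by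
      rw [← QuotientGroup.eq_one_iff, QuotientGroup.mk_pow]
      exact hzn
    have hxH : x ∈ H := by
      by_contra hxH
      refine hq_tf (x : G ⧸ H) (by rwa [Ne, QuotientGroup.eq_one_iff]) ?_
      exact isOfFinOrder_iff_pow_eq_one.mpr
        ⟨n, hn, by rw [← QuotientGroup.mk_pow, QuotientGroup.eq_one_iff]; exact hTH hxn⟩
    have : x ∈ T := hTFstep x hxH n hn hxn
    exact hz (by rwa [hπ, QuotientGroup.mk'_apply, QuotientGroup.eq_one_iff])
  exact ⟨T, hTnormal, hgT, hTFQ, hnilpQ⟩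
end

section
/- For every integer k > 1, the centralizer of the generator a in the Hydra group G(k,a,t) = ⟨a, t | [a, t, …, t] = 1⟩ (with k occurrences of t in the relator) is the cyclic subgroup generated by a. -/
open scoped commutatorElement

/-- The left-normed iterated commutator `[x, y₁, …, yₖ]`. -/
def leftComm {G : Type*} [Group G] (x : G) (l : List G) : G :=
  l.foldl (fun p q => ⁅p, q⁆) x

/-- The Hydra relator `[a, t, …, t]` with `k` occurrences of `t`, where `a` and `t` are
the two generators of the free group on `Fin 2`. -/
def hydraRel (k : ℕ) : FreeGroup (Fin 2) :=
  leftComm (FreeGroup.of 0) (List.replicate k (FreeGroup.of 1))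

namespace Hydra

lemma leftComm_nil {G : Type*} [Group G] (x : G) : leftComm x [] = x := rfl

lemma leftComm_snoc {G : Type*} [Group G] (x : G) (l : List G) (y : G) :
    leftComm x (l ++ [y]) = ⁅leftComm x l, y⁆ := by
  simp [leftComm]

lemma leftComm_cons {G : Type*} [Group G] (x y : G) (l : List G) :
    leftComm x (y :: l) = leftComm ⁅x, y⁆ l := rfl

lemma map_leftComm {G H : Type*} [Group G] [Group H] (f : G →* H) (x : G) (l : List G) :
    f (leftComm x l) = leftComm (f x) (l.map f) := by
  induction l generalizing x with
  | nil => rfl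
  | cons y l ih => rw [leftComm_cons, ih, List.map_cons, leftComm_cons, commutatorElement_def,
      commutatorElement_def]; simp

section FreeGroupCentralizer

variable {α : Type*} [DecidableEq α]

open FreeGroup

lemma toWord_single_mul_nocancel (x : α × Bool) (w : FreeGroup α)
    (h : ∀ hd ∈ w.toWord.head?, ¬(x.1 = hd.1 ∧ x.2 = !hd.2)) :
    (FreeGroup.mk [x] * w).toWord = x :: w.toWord := by
  conv_lhs => rw [← mk_toWord (x := w)]
  rw [mul_mk, toWord_mk, List.singleton_append, reduce.cons, reduce_toWord]
  cases hL : w.toWord with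
  | nil => rfl
  | cons hd tl =>
    have := h hd (by rw [hL]; rfl)
    simp only [if_neg this]

lemma toWord_single_mul_cancel (x hd : α × Bool) (tl : List (α × Bool)) (w : FreeGroup α)
    (hL : w.toWord = hd :: tl) (h : x.1 = hd.1 ∧ x.2 = !hd.2) :
    (FreeGroup.mk [x] * w).toWord = tl := by
  conv_lhs => rw [← mk_toWord (x := w)]
  rw [mul_mk, toWord_mk, List.singleton_append, reduce.cons, reduce_toWord, hL]
  simp only [if_pos h]

lemma of_eq_mk (a : α) : (FreeGroup.of a : FreeGroup α) = FreeGroup.mk [(a, true)] := rfl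

lemma inv_of_eq_mk (a : α) : (FreeGroup.of a : FreeGroup α)⁻¹ = FreeGroup.mk [(a, false)] := by
  rw [of_eq_mk, inv_mk]; rfl

lemma invRev_cons (x : α × Bool) (L : List (α × Bool)) :
    invRev (x :: L) = invRev L ++ [(x.1, !x.2)] := by
  simp [invRev]

lemma mk_single_comm (a0 : α) (b : Bool) :
    FreeGroup.mk [(a0, b)] * FreeGroup.of a0 = FreeGroup.of a0 * FreeGroup.mk [(a0, b)] := by
  cases b
  · rw [← inv_of_eq_mk]; group
  · rw [← of_eq_mk]

/-- In a free group, an element commuting with a generator is a power of that generator. -/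
lemma commute_of_imp_zpow (a0 : α) :
    ∀ (n : ℕ) (w : FreeGroup α), w.toWord.length ≤ n →
      w * FreeGroup.of a0 = FreeGroup.of a0 * w → ∃ z : ℤ, w = FreeGroup.of a0 ^ z := by
  intro n
  induction n with
  | zero =>
    intro w hw _
    refine ⟨0, ?_⟩
    rw [zpow_zero, ← toWord_eq_nil_iff]
    exact List.length_eq_zero_iff.mp (Nat.le_zero.mp hw)
  | succ n ih =>
    intro w hw hcomm
    cases hL : w.toWord with
    | nil => exact ⟨0, by rw [zpow_zero, ← toWord_eq_nil_iff, hL]⟩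
    | cons hd tl =>
      by_cases hhd : hd.1 = a0
      · -- head involves the generator: strip it
        set x : α × Bool := (a0, !hd.2) with hx
        have hcancel : x.1 = hd.1 ∧ x.2 = !hd.2 := ⟨hhd.symm, rfl⟩
        have htw : (FreeGroup.mk [x] * w).toWord = tl :=
          toWord_single_mul_cancel x hd tl w hL hcancel
        have hlen : (FreeGroup.mk [x] * w).toWord.length ≤ n := by
          rw [htw]
          rw [hL] at hw; simpa using hw
        have hcomm' : (FreeGroup.mk [x] * w) * FreeGroup.of a0
            = FreeGroup.of a0 * (FreeGroup.mk [x] * w) := by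
          have : FreeGroup.mk [x] * FreeGroup.of a0 = FreeGroup.of a0 * FreeGroup.mk [x] := by
            rw [hx]; exact mk_single_comm a0 _
          calc FreeGroup.mk [x] * w * FreeGroup.of a0 = FreeGroup.mk [x] * (w * FreeGroup.of a0) := by group
            _ = FreeGroup.mk [x] * (FreeGroup.of a0 * w) := by rw [hcomm]
            _ = (FreeGroup.mk [x] * FreeGroup.of a0) * w := by group
            _ = FreeGroup.of a0 * (FreeGroup.mk [x] * w) := by rw [this]; group
        obtain ⟨z, hz⟩ := ih _ hlen hcomm'
        have hxw : w = (FreeGroup.mk [x])⁻¹ * FreeGroup.of a0 ^ z := by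
          rw [← hz]; group
        have hx : x = (a0, !hd.2) := rfl
        cases hb : hd.2
        · refine ⟨-1 + z, ?_⟩
          rw [hxw, hx, hb, show ((a0, !false) : α × Bool) = (a0, true) from rfl, ← of_eq_mk,
            zpow_add, zpow_neg_one]
        · refine ⟨1 + z, ?_⟩
          rw [hxw, hx, hb, show ((a0, !true) : α × Bool) = (a0, false) from rfl, ← inv_of_eq_mk,
            zpow_add, zpow_one, inv_inv]
      · -- head doesn't involve the generator; look at the inverse word
        have hM : w⁻¹.toWord = invRev w.toWord := toWord_inv w
        cases hM' : w⁻¹.toWord with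
        | nil =>
          exfalso
          rw [toWord_eq_nil_iff] at hM'
          rw [inv_eq_one] at hM'
          rw [hM', toWord_one] at hL; exact absurd hL (List.cons_ne_nil _ _).symm
        | cons hd' tl' =>
          by_cases hhd' : hd'.1 = a0
          · -- the inverse starts with the generator
            set x : α × Bool := (a0, !hd'.2) with hx
            have hcancel : x.1 = hd'.1 ∧ x.2 = !hd'.2 := ⟨hhd'.symm, rfl⟩
            have htw : (FreeGroup.mk [x] * w⁻¹).toWord = tl' :=
              toWord_single_mul_cancel x hd' tl' w⁻¹ hM' hcancel
            have hlen : (FreeGroup.mk [x] * w⁻¹).toWord.length ≤ n := by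
              rw [htw]
              have h1 : w⁻¹.toWord.length ≤ n + 1 := by
                rw [hM, invRev_length]; exact hw
              rw [hM'] at h1; simpa using h1
            have hcomminv : w⁻¹ * FreeGroup.of a0 = FreeGroup.of a0 * w⁻¹ := by
              have := hcomm
              calc w⁻¹ * FreeGroup.of a0 = w⁻¹ * FreeGroup.of a0 * w * w⁻¹ := by group
                _ = w⁻¹ * (FreeGroup.of a0 * w) * w⁻¹ := by group
                _ = w⁻¹ * (w * FreeGroup.of a0) * w⁻¹ := by rw [hcomm]
                _ = FreeGroup.of a0 * w⁻¹ := by group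
            have hcomm' : (FreeGroup.mk [x] * w⁻¹) * FreeGroup.of a0
                = FreeGroup.of a0 * (FreeGroup.mk [x] * w⁻¹) := by
              have : FreeGroup.mk [x] * FreeGroup.of a0 = FreeGroup.of a0 * FreeGroup.mk [x] := by
                rw [hx]; exact mk_single_comm a0 _
              calc FreeGroup.mk [x] * w⁻¹ * FreeGroup.of a0
                  = FreeGroup.mk [x] * (w⁻¹ * FreeGroup.of a0) := by group
                _ = FreeGroup.mk [x] * (FreeGroup.of a0 * w⁻¹) := by rw [hcomminv]
                _ = (FreeGroup.mk [x] * FreeGroup.of a0) * w⁻¹ := by group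
                _ = FreeGroup.of a0 * (FreeGroup.mk [x] * w⁻¹) := by rw [this]; group
            obtain ⟨z, hz⟩ := ih _ hlen hcomm'
            have hxw : w⁻¹ = (FreeGroup.mk [x])⁻¹ * FreeGroup.of a0 ^ z := by
              rw [← hz]; group
            have hwv : w = (FreeGroup.of a0 ^ z)⁻¹ * FreeGroup.mk [x] := by
              rw [← inv_inv w, hxw]; group
            have hx : x = (a0, !hd'.2) := rfl
            have hzc : ∀ u : ℤ, FreeGroup.of a0 ^ z * FreeGroup.of a0 ^ u
                = FreeGroup.of a0 ^ u * FreeGroup.of a0 ^ z := fun u => (zpow_mul_comm _ _ _)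
            cases hb : hd'.2
            · refine ⟨1 - z, ?_⟩
              rw [hwv, hx, hb, show ((a0, !false) : α × Bool) = (a0, true) from rfl, ← of_eq_mk,
                zpow_sub, zpow_one]
              group
            · refine ⟨-1 - z, ?_⟩
              rw [hwv, hx, hb, show ((a0, !true) : α × Bool) = (a0, false) from rfl, ← inv_of_eq_mk,
                zpow_sub, zpow_neg_one]
              group
          · -- neither end involves the generator: contradiction
            exfalso
            have h1 : (FreeGroup.of a0 * w).toWord = (a0, true) :: w.toWord := by
              rw [of_eq_mk]
              refine toWord_single_mul_nocancel _ _ ?_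
              intro h hh
              rw [hL] at hh
              simp only [List.head?_cons, Option.mem_def, Option.some.injEq] at hh
              subst hh
              rintro ⟨h1', _⟩; exact hhd h1'.symm
            have h2 : ((FreeGroup.of a0)⁻¹ * w⁻¹).toWord = (a0, false) :: w⁻¹.toWord := by
              rw [inv_of_eq_mk]
              refine toWord_single_mul_nocancel _ _ ?_
              intro h hh
              rw [hM'] at hh
              simp only [List.head?_cons, Option.mem_def, Option.some.injEq] at hh
              subst hh
              rintro ⟨h1', _⟩; exact hhd' h1'.symm
            have h3 : (w * FreeGroup.of a0).toWord = w.toWord ++ [(a0, true)] := by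
              have : w * FreeGroup.of a0 = ((FreeGroup.of a0)⁻¹ * w⁻¹)⁻¹ := by group
              rw [this, toWord_inv, h2, invRev_cons, hM, invRev_invRev]; rfl
            rw [hcomm, h1] at h3
            rw [hL] at h3
            rw [List.cons_append] at h3
            have := (List.cons.injEq _ _ _ _).mp h3
            exact hhd (congrArg Prod.fst this.1).symm


end FreeGroupCentralizer

section Theta
variable (m : ℕ)

/-- next generator, or 1 at the top -/
def nxt (j : Fin (m + 2)) : FreeGroup (Fin (m + 2)) :=
  if h : (j : ℕ) + 1 < m + 2 then FreeGroup.of ⟨(j : ℕ) + 1, h⟩ else 1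

/-- the hydra endomorphism `e_j ↦ e_{j+1}⁻¹ e_j` -/
def theta : FreeGroup (Fin (m + 2)) →* FreeGroup (Fin (m + 2)) :=
  FreeGroup.lift (fun j => (nxt m j)⁻¹ * FreeGroup.of j)

/-- `nu j` is the inverse image of generator `e_{m+1-j}` under `theta`. -/
def nu : ℕ → FreeGroup (Fin (m + 2))
  | 0 => FreeGroup.of ⟨m + 1, by omega⟩
  | j + 1 =>
      nu j *
        (if h : j + 1 < m + 2 then FreeGroup.of (⟨m + 1 - (j + 1), by omega⟩ : Fin (m + 2)) else 1)

def theta' : FreeGroup (Fin (m + 2)) →* FreeGroup (Fin (m + 2)) :=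
  FreeGroup.lift (fun j => nu m (m + 1 - (j : ℕ)))

lemma theta_of (j : Fin (m + 2)) :
    theta m (FreeGroup.of j) = (nxt m j)⁻¹ * FreeGroup.of j :=
  FreeGroup.lift_apply_of

lemma theta'_of (j : Fin (m + 2)) : theta' m (FreeGroup.of j) = nu m (m + 1 - (j : ℕ)) :=
  FreeGroup.lift_apply_of

lemma theta_nu : ∀ j, j ≤ m + 1 → theta m (nu m j) = FreeGroup.of ⟨m + 1 - j, by omega⟩ := by
  intro j
  induction j with
  | zero =>
    intro _
    rw [show nu m 0 = FreeGroup.of ⟨m + 1, by omega⟩ from rfl, theta_of]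
    rw [nxt, dif_neg (by simp), inv_one, one_mul]
    simp
  | succ j ih =>
    intro hj
    rw [show nu m (j+1) = nu m j * (if h : j + 1 < m + 2 then
        FreeGroup.of (⟨m + 1 - (j + 1), by omega⟩ : Fin (m + 2)) else 1) from rfl]
    rw [dif_pos (by omega)]
    rw [map_mul, theta_of, ih (by omega), nxt, dif_pos (by simp)]
    have hfin : (⟨((⟨m + 1 - (j + 1), by omega⟩ : Fin (m + 2)) : ℕ) + 1, by simp⟩
        : Fin (m + 2)) = ⟨m + 1 - j, by omega⟩ := by
      simp only [Fin.mk.injEq]; omega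
    rw [hfin, ← mul_assoc, mul_inv_cancel, one_mul]

lemma theta_comp_theta' : (theta m).comp (theta' m) = MonoidHom.id _ := by
  apply FreeGroup.ext_hom
  intro j
  rw [MonoidHom.comp_apply, MonoidHom.id_apply, theta'_of, theta_nu m _ (by omega)]
  congr 1
  have hj : (j : ℕ) ≤ m + 1 := by have := j.isLt; omega
  rw [Fin.ext_iff, Fin.val_mk]
  omega

lemma theta'_comp_theta : (theta' m).comp (theta m) = MonoidHom.id _ := by
  apply FreeGroup.ext_hom
  intro j
  rw [MonoidHom.comp_apply, MonoidHom.id_apply, theta_of, map_mul, map_inv, theta'_of]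
  rcases Nat.lt_or_ge ((j : ℕ) + 1) (m + 2) with h | h
  · rw [nxt, dif_pos h, theta'_of]
    have h2 : ((⟨(j : ℕ) + 1, h⟩ : Fin (m + 2)) : ℕ) = (j : ℕ) + 1 := rfl
    rw [h2, show m + 1 - ((j : ℕ) + 1) = m - (j : ℕ) from by omega,
      show m + 1 - (j : ℕ) = (m - (j : ℕ)) + 1 from by omega]
    rw [show nu m ((m - (j : ℕ)) + 1) = nu m (m - (j : ℕ)) * (if h : (m - (j : ℕ)) + 1 < m + 2 then
        FreeGroup.of (⟨m + 1 - ((m - (j : ℕ)) + 1), by omega⟩ : Fin (m + 2)) else 1) from rfl]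
    rw [dif_pos (by omega)]
    have hfin : (⟨m + 1 - (m - (j : ℕ) + 1), by omega⟩ : Fin (m + 2)) = j := by
      have : (j : ℕ) < m + 2 := j.isLt
      rw [Fin.ext_iff, Fin.val_mk]
      omega
    rw [hfin, ← mul_assoc, inv_mul_cancel, one_mul]
  · have hj : (j : ℕ) = m + 1 := by have := j.isLt; omega
    rw [nxt, dif_neg (by omega), map_one, inv_one, one_mul, hj]
    simp only [Nat.sub_self]
    rw [show nu m 0 = FreeGroup.of ⟨m + 1, by omega⟩ from rfl]
    congr 1
    rw [Fin.ext_iff, Fin.val_mk, hj]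

/-- the hydra automorphism -/
def thetaAut : MulAut (FreeGroup (Fin (m + 2))) :=
  MonoidHom.toMulEquiv (theta m) (theta' m) (theta'_comp_theta m) (theta_comp_theta' m)

lemma thetaAut_apply (x : FreeGroup (Fin (m + 2))) : thetaAut m x = theta m x := rfl

end Theta

section Psi
variable (m : ℕ)

/-- exponent-sum of generator `r` -/
def psi (r : ℕ) : FreeGroup (Fin (m + 2)) →* Multiplicative ℤ :=
  FreeGroup.lift (fun j => if (j : ℕ) = r then Multiplicative.ofAdd (1 : ℤ) else 1)

lemma psi_of (r : ℕ) (j : Fin (m + 2)) :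
    psi m r (FreeGroup.of j) = if (j : ℕ) = r then Multiplicative.ofAdd (1 : ℤ) else 1 :=
  FreeGroup.lift_apply_of

lemma psi0_nxt (j : Fin (m + 2)) : psi m 0 (nxt m j) = 1 := by
  rw [nxt]
  split
  · rw [psi_of, if_neg (by simp)]
  · exact map_one _

lemma psi0_theta_apply (x : FreeGroup (Fin (m + 2))) :
    psi m 0 (theta m x) = psi m 0 x := by
  have key : (psi m 0).comp (theta m) = psi m 0 := by
    apply FreeGroup.ext_hom
    intro j
    rw [MonoidHom.comp_apply, theta_of, map_mul, map_inv, psi0_nxt, inv_one, one_mul]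
  exact DFunLike.congr_fun key x

lemma psi1_nxt (j : Fin (m + 2)) :
    psi m 1 (nxt m j) = if (j : ℕ) = 0 then Multiplicative.ofAdd (1 : ℤ) else 1 := by
  rw [nxt]
  rcases Nat.lt_or_ge ((j : ℕ) + 1) (m + 2) with h | h
  · rw [dif_pos h, psi_of]
    congr 1
    simp only [eq_iff_iff]
    omega
  · rw [dif_neg (by omega), map_one, if_neg (by have := j.isLt; omega)]

lemma psi1_theta_apply (x : FreeGroup (Fin (m + 2))) :
    psi m 1 (theta m x) = psi m 1 x * (psi m 0 x)⁻¹ := by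
  have key : (psi m 1).comp (theta m) = (psi m 1) * (psi m 0)⁻¹ := by
    apply FreeGroup.ext_hom
    intro j
    rw [MonoidHom.comp_apply, theta_of, map_mul, map_inv, psi1_nxt]
    have : psi m 1 (FreeGroup.of j) * ((psi m 0) (FreeGroup.of j))⁻¹
        = (if (j : ℕ) = 0 then Multiplicative.ofAdd (1 : ℤ) else 1)⁻¹
          * psi m 1 (FreeGroup.of j) := by
      rw [psi_of m 0, mul_comm]
    rw [MonoidHom.mul_apply, MonoidHom.inv_apply, this]
  have h2 := DFunLike.congr_fun key x
  simpa using h2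

lemma thetaAut_symm_apply (x : FreeGroup (Fin (m + 2))) :
    theta m ((thetaAut m)⁻¹ x) = x := by
  rw [← thetaAut_apply]
  simp

lemma psi0_thetaAut_inv_apply (x : FreeGroup (Fin (m + 2))) :
    psi m 0 ((thetaAut m)⁻¹ x) = psi m 0 x := by
  conv_rhs => rw [← thetaAut_symm_apply m x, psi0_theta_apply]

lemma psi1_thetaAut_inv_apply (x : FreeGroup (Fin (m + 2))) :
    psi m 1 ((thetaAut m)⁻¹ x) = psi m 1 x * psi m 0 x := by
  have h := psi1_theta_apply m ((thetaAut m)⁻¹ x)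
  rw [thetaAut_symm_apply, psi0_thetaAut_inv_apply] at h
  have := congrArg (· * psi m 0 x) h
  simpa [mul_assoc] using this.symm

lemma psi0_zpow (n : ℤ) (x : FreeGroup (Fin (m + 2))) :
    psi m 0 ((thetaAut m ^ n) x) = psi m 0 x := by
  induction n using Int.induction_on generalizing x with
  | zero => simp
  | succ n ih =>
    have h : (thetaAut m ^ ((n : ℤ) + 1)) x = (thetaAut m ^ (n : ℤ)) (thetaAut m x) := by
      rw [zpow_add_one, MulAut.mul_apply]
    rw [h, ih, thetaAut_apply, psi0_theta_apply]
  | pred n ih =>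
    have h : (thetaAut m ^ (-(n : ℤ) - 1)) x = (thetaAut m ^ (-(n : ℤ))) ((thetaAut m)⁻¹ x) := by
      rw [zpow_sub_one, MulAut.mul_apply]
    rw [h, ih, psi0_thetaAut_inv_apply]

lemma psi1_zpow (n : ℤ) (x : FreeGroup (Fin (m + 2))) :
    psi m 1 ((thetaAut m ^ n) x) = psi m 1 x * (psi m 0 x) ^ (-n) := by
  induction n using Int.induction_on generalizing x with
  | zero => simp
  | succ n ih =>
    have h : (thetaAut m ^ ((n : ℤ) + 1)) x = (thetaAut m ^ (n : ℤ)) (thetaAut m x) := by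
      rw [zpow_add_one, MulAut.mul_apply]
    rw [h, ih, thetaAut_apply, psi1_theta_apply, psi0_theta_apply,
      show -((n : ℤ) + 1) = (-n) + (-1) from by ring, zpow_add, zpow_neg_one,
      mul_assoc, mul_comm ((psi m 0 x)⁻¹)]
  | pred n ih =>
    have h : (thetaAut m ^ (-(n : ℤ) - 1)) x = (thetaAut m ^ (-(n : ℤ))) ((thetaAut m)⁻¹ x) := by
      rw [zpow_sub_one, MulAut.mul_apply]
    rw [h, ih, psi1_thetaAut_inv_apply, psi0_thetaAut_inv_apply,
      show -(-(n : ℤ) - 1) = n + 1 from by ring, zpow_add, zpow_one,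
      mul_assoc, mul_comm (psi m 0 x), neg_neg]

end Psi

section Main
open SemidirectProduct
variable (m : ℕ)

def phi : Multiplicative ℤ →* MulAut (FreeGroup (Fin (m + 2))) :=
  zpowersHom _ (thetaAut m)

abbrev HH := SemidirectProduct (FreeGroup (Fin (m + 2))) (Multiplicative ℤ) (phi m)

abbrev rels : Set (FreeGroup (Fin 2)) := {hydraRel (m + 2)}

abbrev GG := PresentedGroup (rels m)

def A : GG m := PresentedGroup.of 0
def T : GG m := PresentedGroup.of 1

def e0 : Fin (m + 2) := ⟨0, by omega⟩

lemma phi_ofAdd_one : phi m (Multiplicative.ofAdd (1 : ℤ)) = thetaAut m := by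
  rw [phi, zpowersHom_apply]
  simp

lemma comm_inl_inr (x : FreeGroup (Fin (m + 2))) :
    ⁅(inl x : HH m), (inr (Multiplicative.ofAdd (1 : ℤ)) : HH m)⁆
      = inl (x * (theta m x)⁻¹) := by
  rw [commutatorElement_def,
    ← map_inv (inr : Multiplicative ℤ →* HH m) (Multiplicative.ofAdd (1 : ℤ)),
    ← map_inv (inl : FreeGroup (Fin (m + 2)) →* HH m) x,
    mul_assoc (inl x) (inr (Multiplicative.ofAdd (1 : ℤ))) (inl x⁻¹),
    mul_assoc (inl x), ← SemidirectProduct.inl_aut, ← map_mul]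
  congr 2
  rw [phi_ofAdd_one, map_inv, thetaAut_apply]

lemma leftComm_inl_aux : ∀ (j : ℕ) (hj : j < m + 2),
    leftComm (inl (FreeGroup.of (e0 m)) : HH m)
      (List.replicate j (inr (Multiplicative.ofAdd (1 : ℤ))))
      = inl (FreeGroup.of ⟨j, hj⟩) := by
  intro j
  induction j with
  | zero => intro _; rfl
  | succ j ih =>
    intro hj
    rw [List.replicate_succ', leftComm_snoc, ih (by omega), comm_inl_inr, theta_of, nxt,
      dif_pos (by simpa using hj)]
    rw [show ((⟨(⟨j, by omega⟩ : Fin (m + 2)).val + 1, by simpa using hj⟩ : Fin (m + 2)))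
      = ⟨j + 1, hj⟩ from rfl]
    congr 1
    group

lemma leftComm_inl_top :
    leftComm (inl (FreeGroup.of (e0 m)) : HH m)
      (List.replicate (m + 2) (inr (Multiplicative.ofAdd (1 : ℤ)))) = 1 := by
  rw [List.replicate_succ', leftComm_snoc,
    leftComm_inl_aux m (m + 1) (by omega), comm_inl_inr, theta_of, nxt,
    dif_neg (by simp)]
  rw [inv_one, one_mul, mul_inv_cancel, map_one]

def fgen : Fin 2 → HH m := fun i =>
  if i = 0 then inl (FreeGroup.of (e0 m)) else inr (Multiplicative.ofAdd (1 : ℤ))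

lemma hrel : ∀ r ∈ rels m, FreeGroup.lift (fgen m) r = 1 := by
  intro r hr
  rw [Set.mem_singleton_iff] at hr
  subst hr
  rw [hydraRel, map_leftComm, List.map_replicate, FreeGroup.lift_apply_of, FreeGroup.lift_apply_of]
  rw [show fgen m 0 = inl (FreeGroup.of (e0 m)) from if_pos rfl,
    show fgen m 1 = inr (Multiplicative.ofAdd (1 : ℤ)) from if_neg (by decide)]
  exact leftComm_inl_top m

def f : GG m →* HH m := PresentedGroup.toGroup (hrel m)

lemma f_A : f m (A m) = inl (FreeGroup.of (e0 m)) := by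
  rw [A, f, PresentedGroup.toGroup.of]
  exact if_pos rfl

lemma f_T : f m (T m) = inr (Multiplicative.ofAdd (1 : ℤ)) := by
  rw [T, f, PresentedGroup.toGroup.of]
  exact if_neg (by decide)

/-- images of the free-by-cyclic generators in the presented group -/
def bb (j : ℕ) : GG m := leftComm (A m) (List.replicate j (T m))

lemma bb_zero : bb m 0 = A m := rfl

lemma bb_succ (j : ℕ) : bb m (j + 1) = ⁅bb m j, T m⁆ := by
  rw [bb, bb, List.replicate_succ', leftComm_snoc]

lemma conj_bb (j : ℕ) : T m * bb m j * (T m)⁻¹ = (bb m (j + 1))⁻¹ * bb m j := by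
  rw [bb_succ, commutatorElement_def]
  group

lemma bb_top : bb m (m + 2) = 1 := by
  have h1 : bb m (m + 2) = PresentedGroup.mk (rels m) (hydraRel (m + 2)) := by
    rw [hydraRel, map_leftComm, List.map_replicate]
    rfl
  rw [h1]
  exact (QuotientGroup.eq_one_iff _).mpr
    (Subgroup.subset_normalClosure (Set.mem_singleton _))

def gnorm : FreeGroup (Fin (m + 2)) →* GG m := FreeGroup.lift (fun j => bb m (j : ℕ))

def gZ : Multiplicative ℤ →* GG m := zpowersHom _ (T m)

lemma gnorm_of (j : Fin (m + 2)) : gnorm m (FreeGroup.of j) = bb m (j : ℕ) :=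
  FreeGroup.lift_apply_of

lemma gnorm_theta (x : FreeGroup (Fin (m + 2))) :
    gnorm m (theta m x) = T m * gnorm m x * (T m)⁻¹ := by
  have key : (gnorm m).comp (theta m)
      = (MulAut.conj (T m)).toMonoidHom.comp (gnorm m) := by
    apply FreeGroup.ext_hom
    intro j
    rw [MonoidHom.comp_apply, MonoidHom.comp_apply, theta_of, map_mul, map_inv, gnorm_of]
    have hn : gnorm m (nxt m j) = bb m ((j : ℕ) + 1) := by
      rw [nxt]
      split
      · exact gnorm_of m _
      · have hj : (j : ℕ) + 1 = m + 2 := by have := j.isLt; omega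
        rw [map_one, hj, bb_top]
    rw [hn, MulEquiv.coe_toMonoidHom, MulAut.conj_apply]
    exact (conj_bb m (j : ℕ)).symm
  have := DFunLike.congr_fun key x
  simpa using this

lemma gnorm_theta_inv (x : FreeGroup (Fin (m + 2))) :
    gnorm m ((thetaAut m)⁻¹ x) = (T m)⁻¹ * gnorm m x * T m := by
  have h : T m * gnorm m ((thetaAut m)⁻¹ x) * (T m)⁻¹ = gnorm m x := by
    rw [← gnorm_theta, thetaAut_symm_apply]
  calc gnorm m ((thetaAut m)⁻¹ x)
      = (T m)⁻¹ * (T m * gnorm m ((thetaAut m)⁻¹ x) * (T m)⁻¹) * T m := by group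
    _ = (T m)⁻¹ * gnorm m x * T m := by rw [h]

lemma gnorm_zpow (n : ℤ) (x : FreeGroup (Fin (m + 2))) :
    gnorm m ((thetaAut m ^ n) x) = (T m) ^ n * gnorm m x * (T m) ^ (-n) := by
  induction n using Int.induction_on generalizing x with
  | zero => simp
  | succ n ih =>
    have h : (thetaAut m ^ ((n : ℤ) + 1)) x = (thetaAut m ^ (n : ℤ)) (thetaAut m x) := by
      rw [zpow_add_one, MulAut.mul_apply]
    rw [h, ih, thetaAut_apply, gnorm_theta]
    group
  | pred n ih =>
    have h : (thetaAut m ^ (-(n : ℤ) - 1)) x = (thetaAut m ^ (-(n : ℤ))) ((thetaAut m)⁻¹ x) := by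
      rw [zpow_sub_one, MulAut.mul_apply]
    rw [h, ih, gnorm_theta_inv]
    group

lemma hcompat : ∀ z : Multiplicative ℤ,
    (gnorm m).comp ((phi m) z).toMonoidHom
      = (MulAut.conj (gZ m z)).toMonoidHom.comp (gnorm m) := by
  intro z
  apply FreeGroup.ext_hom
  intro j
  simp only [MonoidHom.comp_apply, MulEquiv.coe_toMonoidHom, MulAut.conj_apply]
  rw [show (((phi m) z) (FreeGroup.of j) : FreeGroup (Fin (m + 2)))
      = (thetaAut m ^ z.toAdd) (FreeGroup.of j) from rfl]
  rw [gnorm_zpow, show gZ m z = (T m) ^ z.toAdd from rfl, zpow_neg]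

def g : HH m →* GG m := SemidirectProduct.lift (gnorm m) (gZ m) (hcompat m)

lemma gf : (g m).comp (f m) = MonoidHom.id (GG m) := by
  apply PresentedGroup.ext
  intro x
  rw [MonoidHom.comp_apply, MonoidHom.id_apply]
  fin_cases x
  · show g m (f m (A m)) = A m
    rw [f_A, g, SemidirectProduct.lift_inl, gnorm_of]
    rfl
  · show g m (f m (T m)) = T m
    rw [f_T, g, SemidirectProduct.lift_inr]
    rw [show gZ m (Multiplicative.ofAdd (1 : ℤ)) = (T m) ^ (1 : ℤ) from rfl, zpow_one]

lemma fg : (f m).comp (g m) = MonoidHom.id (HH m) := by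
  apply SemidirectProduct.hom_ext
  · apply FreeGroup.ext_hom
    intro j
    simp only [MonoidHom.comp_apply, MonoidHom.id_apply]
    rw [g, SemidirectProduct.lift_inl, gnorm_of, bb, map_leftComm,
      List.map_replicate, f_A, f_T, leftComm_inl_aux m (j : ℕ) j.isLt]
  · apply MonoidHom.ext_mint
    simp only [MonoidHom.comp_apply, MonoidHom.id_apply]
    rw [g, SemidirectProduct.lift_inr]
    rw [show gZ m (Multiplicative.ofAdd (1 : ℤ)) = (T m) ^ (1 : ℤ) from rfl, zpow_one, f_T]

lemma g_f_apply (x : GG m) : g m (f m x) = x := DFunLike.congr_fun (gf m) x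

end Main

end Hydra


open Hydra

/-- Lemma 1: for `k > 1`, the centralizer of the generator `a` in the Hydra group
`G(k,a,t)` is the cyclic subgroup generated by `a`. -/
theorem hydra_centralizer_eq_zpowers (k : ℕ) (hk : 1 < k) :
    Subgroup.centralizer
        {(PresentedGroup.of 0 : PresentedGroup ({hydraRel k} : Set (FreeGroup (Fin 2))))} =
      Subgroup.zpowers
        (PresentedGroup.of 0 : PresentedGroup ({hydraRel k} : Set (FreeGroup (Fin 2)))) := by
  obtain ⟨m, rfl⟩ : ∃ m, k = m + 2 := ⟨k - 2, by omega⟩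
  apply le_antisymm
  · intro x hx
    rw [Subgroup.mem_centralizer_iff] at hx
    have hxA : A m * x = x * A m := hx _ (Set.mem_singleton _)
    have hy := congrArg (f m) hxA
    rw [map_mul, map_mul, f_A] at hy
    have h1 : FreeGroup.of (e0 m) * (f m x).left
        = (f m x).left * (phi m ((f m x).right)) (FreeGroup.of (e0 m)) := by
      have h := congrArg SemidirectProduct.left hy
      simpa [SemidirectProduct.mul_left, SemidirectProduct.left_inl,
        SemidirectProduct.right_inl, map_one] using h
    set n : ℤ := ((f m x).right).toAdd with hn_def
    have h2 := congrArg (psi m 1) h1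
    rw [map_mul, map_mul,
      show (phi m ((f m x).right)) (FreeGroup.of (e0 m))
        = (thetaAut m ^ n) (FreeGroup.of (e0 m)) from rfl, psi1_zpow] at h2
    have p1 : psi m 1 (FreeGroup.of (e0 m)) = 1 := by
      rw [psi_of]; exact if_neg (by simp [e0])
    have p0 : psi m 0 (FreeGroup.of (e0 m)) = Multiplicative.ofAdd (1 : ℤ) := by
      rw [psi_of]; exact if_pos rfl
    rw [p1, p0, one_mul, one_mul] at h2
    have h3 : (Multiplicative.ofAdd (1 : ℤ)) ^ (-n) = 1 := by
      have h4 : psi m 1 ((f m x).left) * 1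
          = psi m 1 ((f m x).left) * (Multiplicative.ofAdd (1 : ℤ)) ^ (-n) := by
        rw [mul_one]; exact h2
      exact (mul_left_cancel h4).symm
    have hn : n = 0 := by
      have h5 := congrArg Multiplicative.toAdd h3
      rw [toAdd_zpow, toAdd_ofAdd] at h5
      simpa using h5
    have hr1 : (f m x).right = 1 := by
      have h6 : ((f m x).right).toAdd = (0 : ℤ) := hn
      rw [← ofAdd_toAdd ((f m x).right), h6]
      rfl
    have h6 : (f m x).left * FreeGroup.of (e0 m) = FreeGroup.of (e0 m) * (f m x).left := by
      rw [hr1, map_one, MulAut.one_apply] at h1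
      exact h1.symm
    obtain ⟨z, hz⟩ := commute_of_imp_zpow (e0 m) ((f m x).left.toWord.length)
      (f m x).left le_rfl h6
    have hfx : f m x = f m (A m ^ z) := by
      rw [map_zpow, f_A, ← map_zpow, ← SemidirectProduct.inl_left_mul_inr_right (f m x),
        hr1, map_one, mul_one, hz]
    have hxz : x = A m ^ z := by
      have h7 := congrArg (g m) hfx
      rwa [g_f_apply, g_f_apply] at h7
    rw [hxz]
    exact Subgroup.zpow_mem _ (Subgroup.mem_zpowers _) z
  · rw [Subgroup.zpowers_le, Subgroup.mem_centralizer_iff]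
    rintro h hh
    rw [Set.mem_singleton_iff] at hh
    subst hh
    rfl
end
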